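/- Let ϱ be a density operator on a finite-dimensional Hilbert space with minimal eigenvalue λ_min and corresponding unit eigenvector |ψ⟩. Then the trace norm satisfies ‖ϱ - |ψ⟩⟨ψ|‖₁ = 2(1 - λ_min); consequently sup over all states ξ of ‖ϱ - ξ‖₁ equals 2(1 - b(ϱ)) = 2(1 - λ_min). -/

import Mathlib

open Matrix
open scoped ComplexOrder

/-- The weight function `t_y(x) = sup{ t ∈ [0,1) : (y - t·x)/(1-t) ∈ Z }`. -/
noncomputable def weight {V : Type*} [AddCommGroup V] [Module ℝ V] (Z : Set V) (y x : V) : ℝ :=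
  sSup {t : ℝ | 0 ≤ t ∧ t < 1 ∧ (1 - t)⁻¹ • (y - t • x) ∈ Z}

/-- The boundariness `b(y) = inf_{x ∈ Z} t_y(x)`. -/
noncomputable def bdness {V : Type*} [AddCommGroup V] [Module ℝ V] (Z : Set V) (y : V) : ℝ :=
  sInf (weight Z y '' Z)

/-- The trace norm `‖A‖₁ = tr √(A†A)`. -/
noncomputable def traceNorm {d : ℕ} (A : Matrix (Fin d) (Fin d) ℂ) : ℝ :=
  (((Matrix.posSemidef_conjTranspose_mul_self A).1.eigenvectorUnitary.1 *
      diagonal ((fun x : ℝ => (x : ℂ)) ∘ (√·) ∘ (Matrix.posSemidef_conjTranspose_mul_self A).1.eigenvalues) *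
      (star (Matrix.posSemidef_conjTranspose_mul_self A).1.eigenvectorUnitary : Matrix (Fin d) (Fin d) ℂ)).trace).re

namespace TraceNormAux

variable {d : ℕ}

lemma smul_psd {c : ℝ} (hc : 0 ≤ c) {M : Matrix (Fin d) (Fin d) ℂ} (hM : M.PosSemidef) :
    ((c : ℂ) • M).PosSemidef := by
  exact hM.smul (by exact_mod_cast hc)

lemma trace_nonneg_of_psd {M : Matrix (Fin d) (Fin d) ℂ} (hM : M.PosSemidef) :
    0 ≤ M.trace := by
  exact hM.trace_nonneg

lemma traceNorm_orthoDecomp {B C : Matrix (Fin d) (Fin d) ℂ} (hB : B.PosSemidef)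
    (hC : C.PosSemidef) (hBC : B * C = 0) (hCB : C * B = 0) :
    traceNorm (B - C) = B.trace.re + C.trace.re := by
  have hsum : (B + C).PosSemidef := hB.add hC
  have hsq : (B + C) ^ 2 = (B - C)ᴴ * (B - C) := by
    rw [conjTranspose_sub, hB.1.eq, hC.1.eq]
    rw [pow_two]
    rw [mul_add, add_mul, add_mul, mul_sub, sub_mul, sub_mul, hBC, hCB]
    noncomm_ring
  have hH := (Matrix.posSemidef_conjTranspose_mul_self (B - C)).1
  have key : cfc Real.sqrt ((B - C)ᴴ * (B - C)) = B + C := by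
    rw [← hsq, ← cfc_comp_pow Real.sqrt 2 (B + C) (ha := hsum.1.isSelfAdjoint)]
    refine (cfc_congr ?_).trans (cfc_id ℝ (B + C) hsum.1.isSelfAdjoint)
    intro x hx
    rw [hsum.1.spectrum_real_eq_range_eigenvalues] at hx
    obtain ⟨i, rfl⟩ := hx
    exact Real.sqrt_sq (hsum.eigenvalues_nonneg i)
  have e2 : traceNorm (B - C) = (cfc Real.sqrt ((B - C)ᴴ * (B - C))).trace.re := by
    rw [hH.cfc_eq, Matrix.IsHermitian.cfc, Unitary.conjStarAlgAut_apply]; rfl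
  rw [e2, key, Matrix.trace_add, Complex.add_re]

open scoped MatrixOrder in
lemma trace_mul_nonneg {Q M : Matrix (Fin d) (Fin d) ℂ} (hQ : Q.PosSemidef)
    (hM : M.PosSemidef) : 0 ≤ (Q * M).trace := by
  have h1 : Q * M = CFC.sqrt Q * (CFC.sqrt Q * M) := by
    rw [← mul_assoc, CFC.sqrt_mul_sqrt_self Q hQ.nonneg]
  rw [h1, Matrix.trace_mul_comm, mul_assoc]
  have h2 : CFC.sqrt Q * M * CFC.sqrt Q = (CFC.sqrt Q)ᴴ * M * CFC.sqrt Q := by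
    rw [(CFC.sqrt_nonneg Q).posSemidef.1.eq]
  rw [← mul_assoc, h2]
  exact trace_nonneg_of_psd (hM.conjTranspose_mul_mul_same _)

section spec
variable {M : Matrix (Fin d) (Fin d) ℂ} (hM : M.IsHermitian)

local notation "U" => (Matrix.IsHermitian.eigenvectorUnitary hM : Matrix (Fin d) (Fin d) ℂ)

lemma U_mul_star : U * star U = 1 := (Matrix.mem_unitaryGroup_iff).mp (hM.eigenvectorUnitary).2

lemma star_mul_U : star U * U = 1 := (Matrix.mem_unitaryGroup_iff').mp (hM.eigenvectorUnitary).2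

lemma conj_psd (f : Fin d → ℝ) (hf : ∀ i, 0 ≤ f i) :
    (U * Matrix.diagonal (RCLike.ofReal ∘ f) * star U).PosSemidef := by
  rw [Matrix.star_eq_conjTranspose]
  exact (Matrix.PosSemidef.diagonal (fun i => by
    simpa using Complex.zero_le_real.mpr (hf i))).mul_mul_conjTranspose_same _

lemma conj_trace (D : Matrix (Fin d) (Fin d) ℂ) :
    (U * D * star U).trace = D.trace := by
  rw [Matrix.trace_mul_comm, ← mul_assoc, star_mul_U hM, one_mul]

lemma conj_mul_conj (D E : Matrix (Fin d) (Fin d) ℂ) :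
    (U * D * star U) * (U * E * star U) = U * (D * E) * star U := by
  have h := star_mul_U hM
  calc U * D * star U * (U * E * star U)
      = U * D * (star U * U) * E * star U := by noncomm_ring
    _ = U * (D * E) * star U := by rw [h]; noncomm_ring

end spec

lemma one_sub_state_psd {ξ : Matrix (Fin d) (Fin d) ℂ} (hξ : ξ.PosSemidef) (htr : ξ.trace = 1) :
    ((1 : Matrix (Fin d) (Fin d) ℂ) - ξ).PosSemidef := by
  have hH := hξ.1
  have hspec := hH.spectral_theorem
  rw [Unitary.conjStarAlgAut_apply] at hspec
  have hsum : ∑ i, hH.eigenvalues i = 1 := by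
    have : ξ.trace = (Matrix.diagonal (RCLike.ofReal ∘ hH.eigenvalues) :
        Matrix (Fin d) (Fin d) ℂ).trace := by
      conv_lhs => rw [hspec]
      exact conj_trace hH _
    rw [htr, Matrix.trace_diagonal] at this
    have := congrArg Complex.re this.symm
    simpa using this
  have hle : ∀ i, hH.eigenvalues i ≤ 1 := by
    intro i
    rw [← hsum]
    exact Finset.single_le_sum (fun j _ => hξ.eigenvalues_nonneg j) (Finset.mem_univ i)
  have key : (1 : Matrix (Fin d) (Fin d) ℂ) - ξ =
      (hH.eigenvectorUnitary : Matrix (Fin d) (Fin d) ℂ) *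
      Matrix.diagonal (RCLike.ofReal ∘ fun i => 1 - hH.eigenvalues i) *
      star (hH.eigenvectorUnitary : Matrix (Fin d) (Fin d) ℂ) := by
    have : (Matrix.diagonal (RCLike.ofReal ∘ fun i => 1 - hH.eigenvalues i) :
        Matrix (Fin d) (Fin d) ℂ) = 1 - Matrix.diagonal (RCLike.ofReal ∘ hH.eigenvalues) := by
      rw [← Matrix.diagonal_one, Matrix.diagonal_sub]
      exact congrArg Matrix.diagonal (funext fun i => by simp [RCLike.ofReal_sub])
    rw [this, mul_sub, sub_mul, ← hspec, mul_one, U_mul_star hH]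
  rw [key]
  exact conj_psd hH _ (fun i => by linarith [hle i])

variable {ψ : Fin d → ℂ}

lemma P_herm : (Matrix.vecMulVec ψ (star ψ)).IsHermitian := by
  unfold Matrix.IsHermitian
  ext i j
  simp [Matrix.vecMulVec_apply, Matrix.conjTranspose_apply, mul_comm]

lemma P_sq (hψ : star ψ ⬝ᵥ ψ = 1) :
    Matrix.vecMulVec ψ (star ψ) * Matrix.vecMulVec ψ (star ψ) = Matrix.vecMulVec ψ (star ψ) := by
  ext i j
  simp only [Matrix.mul_apply, Matrix.vecMulVec_apply, Pi.star_apply]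
  have : ∀ k, ψ i * star (ψ k) * (ψ k * star (ψ j)) = (star (ψ k) * ψ k) * (ψ i * star (ψ j)) := by
    intro k; ring
  rw [Finset.sum_congr rfl (fun k _ => this k), ← Finset.sum_mul]
  have : ∑ k, star (ψ k) * ψ k = 1 := hψ
  rw [this, one_mul]

lemma P_psd (hψ : star ψ ⬝ᵥ ψ = 1) : (Matrix.vecMulVec ψ (star ψ)).PosSemidef := by
  have h : Matrix.vecMulVec ψ (star ψ) =
      (Matrix.vecMulVec ψ (star ψ))ᴴ * Matrix.vecMulVec ψ (star ψ) := by
    rw [(P_herm (ψ := ψ)).eq, P_sq hψ]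
  rw [h]
  exact Matrix.posSemidef_conjTranspose_mul_self _

lemma P_trace (hψ : star ψ ⬝ᵥ ψ = 1) : (Matrix.vecMulVec ψ (star ψ)).trace = 1 := by
  rw [Matrix.trace]
  simp only [Matrix.diag_apply, Matrix.vecMulVec_apply, Pi.star_apply]
  rw [← hψ, dotProduct]
  exact Finset.sum_congr rfl fun i _ => mul_comm _ _

lemma P_mulVec (hψ : star ψ ⬝ᵥ ψ = 1) : (Matrix.vecMulVec ψ (star ψ)) *ᵥ ψ = ψ := by
  funext i
  rw [Matrix.mulVec, dotProduct]
  simp only [Matrix.vecMulVec_apply, Pi.star_apply]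
  have : ∀ k, ψ i * star (ψ k) * ψ k = ψ i * (star (ψ k) * ψ k) := fun k => by ring
  rw [Finset.sum_congr rfl fun k _ => this k, ← Finset.mul_sum]
  have h1 : ∑ k, star (ψ k) * ψ k = 1 := hψ
  rw [h1, mul_one]

variable {ϱ : Matrix (Fin d) (Fin d) ℂ} {lam : ℝ}

lemma rho_mul_P (heig : ϱ *ᵥ ψ = (lam : ℂ) • ψ) :
    ϱ * Matrix.vecMulVec ψ (star ψ) = (lam : ℂ) • Matrix.vecMulVec ψ (star ψ) := by
  ext i j
  simp only [Matrix.mul_apply, Matrix.vecMulVec_apply, Pi.star_apply, Matrix.smul_apply,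
    smul_eq_mul]
  have : ∀ k, ϱ i k * (ψ k * star (ψ j)) = (ϱ i k * ψ k) * star (ψ j) := fun k => by ring
  rw [Finset.sum_congr rfl (fun k _ => this k), ← Finset.sum_mul]
  have h1 : (ϱ *ᵥ ψ) i = ∑ k, ϱ i k * ψ k := rfl
  rw [← h1, heig]
  simp only [Pi.smul_apply, smul_eq_mul]
  ring

lemma P_mul_rho (heig : ϱ *ᵥ ψ = (lam : ℂ) • ψ) (hH : ϱ.IsHermitian) :
    Matrix.vecMulVec ψ (star ψ) * ϱ = (lam : ℂ) • Matrix.vecMulVec ψ (star ψ) := by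
  have h := congrArg Matrix.conjTranspose (rho_mul_P heig)
  rw [Matrix.conjTranspose_mul, hH.eq, (P_herm (ψ := ψ)).eq, Matrix.conjTranspose_smul,
    (P_herm (ψ := ψ)).eq] at h
  rw [h]
  congr 1
  simp [Complex.ext_iff]

lemma real_smul_matrix (r : ℝ) (M : Matrix (Fin d) (Fin d) ℂ) :
    r • M = (r : ℂ) • M := by
  ext i j
  simp [Complex.real_smul]

/-- Part 1: the trace norm to the minimal-eigenvalue projector. -/
lemma traceNorm_P (hψ : star ψ ⬝ᵥ ψ = 1) (heig : ϱ *ᵥ ψ = (lam : ℂ) • ψ)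
    (hpos : ϱ.PosSemidef) (htr : ϱ.trace = 1)
    (hmin : (ϱ - (lam : ℂ) • 1).PosSemidef) (hlam0 : 0 ≤ lam) (hlam1 : lam ≤ 1) :
    traceNorm (ϱ - Matrix.vecMulVec ψ (star ψ)) = 2 * (1 - lam) := by
  set P := Matrix.vecMulVec ψ (star ψ) with hPdef
  have hPpsd : P.PosSemidef := P_psd hψ
  have hPtr : P.trace = 1 := P_trace hψ
  set B := ϱ - (lam : ℂ) • P with hBdef
  set C := ((1 - lam : ℝ) : ℂ) • P with hCdef
  have hBpsd : B.PosSemidef := by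
    have hrw : B = (ϱ - (lam : ℂ) • 1) + (lam : ℂ) • (1 - P) := by
      rw [hBdef, smul_sub]; abel
    rw [hrw]
    exact hmin.add (smul_psd hlam0 (one_sub_state_psd hPpsd hPtr))
  have hCpsd : C.PosSemidef := smul_psd (by linarith) hPpsd
  have hBP : B * P = 0 := by
    rw [hBdef, sub_mul, rho_mul_P heig, smul_mul_assoc, P_sq hψ, sub_self]
  have hPB : P * B = 0 := by
    rw [hBdef, mul_sub, P_mul_rho heig hpos.1, mul_smul_comm, P_sq hψ, sub_self]
  have hBC : B * C = 0 := by rw [hCdef, mul_smul_comm, hBP, smul_zero]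
  have hCB : C * B = 0 := by rw [hCdef, smul_mul_assoc, hPB, smul_zero]
  have hsub : B - C = ϱ - P := by
    rw [hBdef, hCdef]
    push_cast
    rw [sub_smul, one_smul]
    abel
  rw [← hsub, traceNorm_orthoDecomp hBpsd hCpsd hBC hCB]
  have hBtr : B.trace = ((1 - lam : ℝ) : ℂ) := by
    rw [hBdef, Matrix.trace_sub, Matrix.trace_smul, htr, hPtr, smul_eq_mul, mul_one]
    push_cast
    ring
  have hCtr : C.trace = ((1 - lam : ℝ) : ℂ) := by
    rw [hCdef, Matrix.trace_smul, hPtr, smul_eq_mul, mul_one]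
  rw [hBtr, hCtr]
  simp
  ring

/-- Part 2: the upper bound for any state ξ. -/
lemma upper_bound {ξ : Matrix (Fin d) (Fin d) ℂ}
    (hpos : ϱ.PosSemidef) (htr : ϱ.trace = 1)
    (hmin : (ϱ - (lam : ℂ) • 1).PosSemidef) (hlam0 : 0 ≤ lam) (hlam1 : lam ≤ 1)
    (hξ : ξ.PosSemidef) (hξtr : ξ.trace = 1) :
    traceNorm (ϱ - ξ) ≤ 2 * (1 - lam) := by
  have hA : (ϱ - ξ).IsHermitian := hpos.1.sub hξ.1
  set U := (hA.eigenvectorUnitary : Matrix (Fin d) (Fin d) ℂ) with hU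
  set e := hA.eigenvalues with he
  set g : Fin d → ℝ := fun i => max (e i) 0 with hg
  set f : Fin d → ℝ := fun i => max (-(e i)) 0 with hf
  set χ : Fin d → ℝ := fun i => if 0 ≤ e i then 1 else 0 with hχ
  set Ap := U * Matrix.diagonal (RCLike.ofReal ∘ g) * star U with hAp
  set Am := U * Matrix.diagonal (RCLike.ofReal ∘ f) * star U with hAm
  set Q := U * Matrix.diagonal (RCLike.ofReal ∘ χ) * star U with hQ
  have hApm : Ap - Am = ϱ - ξ := by
    rw [hAp, hAm, ← sub_mul, ← mul_sub, Matrix.diagonal_sub]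
    have : (Matrix.diagonal (fun i => (RCLike.ofReal ∘ g) i - (RCLike.ofReal ∘ f) i) :
        Matrix (Fin d) (Fin d) ℂ) = Matrix.diagonal (RCLike.ofReal ∘ e) :=
      congrArg Matrix.diagonal (funext fun i => by
        simp only [Function.comp_apply, hg, hf]
        rw [← RCLike.ofReal_sub, max_zero_sub_max_neg_zero_eq_self])
    have hs := hA.spectral_theorem
    rw [Unitary.conjStarAlgAut_apply] at hs
    rw [this]
    exact hs.symm
  have hApPsd : Ap.PosSemidef := conj_psd hA g (fun i => le_max_right _ _)
  have hAmPsd : Am.PosSemidef := conj_psd hA f (fun i => le_max_right _ _)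
  have hQPsd : Q.PosSemidef := conj_psd hA χ (fun i => by by_cases h : 0 ≤ e i <;> simp [hχ, h])
  have hQ1Psd : ((1 : Matrix (Fin d) (Fin d) ℂ) - Q).PosSemidef := by
    have key : (1 : Matrix (Fin d) (Fin d) ℂ) - Q =
        U * Matrix.diagonal (RCLike.ofReal ∘ fun i => 1 - χ i) * star U := by
      have hd : (Matrix.diagonal (RCLike.ofReal ∘ fun i => 1 - χ i) :
          Matrix (Fin d) (Fin d) ℂ) = 1 - Matrix.diagonal (RCLike.ofReal ∘ χ) := by
        rw [← Matrix.diagonal_one, Matrix.diagonal_sub]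
        exact congrArg Matrix.diagonal (funext fun i => by simp [RCLike.ofReal_sub])
      rw [hd, mul_sub, sub_mul, mul_one, U_mul_star hA, hQ]
    rw [key]
    exact conj_psd hA _ (fun i => by by_cases h : 0 ≤ e i <;> simp [hχ, h])
  have hQA : Q * (ϱ - ξ) = Ap := by
    rw [← hApm, mul_sub, hQ, hAp, hAm, conj_mul_conj, conj_mul_conj,
      Matrix.diagonal_mul_diagonal, Matrix.diagonal_mul_diagonal]
    have h1 : (fun i => (RCLike.ofReal ∘ χ) i * (RCLike.ofReal ∘ g) i) = (RCLike.ofReal ∘ g :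
        Fin d → ℂ) := by
      funext i
      simp only [Function.comp_apply, hχ, hg]
      by_cases h : 0 ≤ e i
      · simp [h]
      · simp [h, max_eq_right (le_of_lt (not_le.mp h))]
    have h2 : (fun i => (RCLike.ofReal ∘ χ) i * (RCLike.ofReal ∘ f) i) = (fun _ => (0:ℂ)) := by
      funext i
      simp only [Function.comp_apply, hχ, hf]
      by_cases h : 0 ≤ e i
      · simp [h, max_eq_right (neg_nonpos.mpr h)]
      · simp [h]
    rw [h1, h2]
    simp
    rfl
  have hgf : ∀ i, g i * f i = 0 := by
    intro i
    by_cases h : 0 ≤ e i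
    · simp [hg, hf, max_eq_right (neg_nonpos.mpr h)]
    · simp [hg, hf, max_eq_right (le_of_lt (not_le.mp h))]
  have hApAm : Ap * Am = 0 := by
    rw [hAp, hAm, conj_mul_conj, Matrix.diagonal_mul_diagonal]
    have : (fun i => (RCLike.ofReal ∘ g) i * (RCLike.ofReal ∘ f) i) = (fun _ => (0:ℂ)) := by
      funext i
      simp only [Function.comp_apply, ← RCLike.ofReal_mul, hgf i, RCLike.ofReal_zero]
    rw [this]
    simp
  have hAmAp : Am * Ap = 0 := by
    rw [hAm, hAp, conj_mul_conj, Matrix.diagonal_mul_diagonal]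
    have : (fun i => (RCLike.ofReal ∘ f) i * (RCLike.ofReal ∘ g) i) = (fun _ => (0:ℂ)) := by
      funext i
      rw [Function.comp_apply, Function.comp_apply, ← RCLike.ofReal_mul, mul_comm, hgf i]
      simp
    rw [this]
    simp
  have htn : traceNorm (ϱ - ξ) = Ap.trace.re + Am.trace.re := by
    rw [← hApm]
    exact traceNorm_orthoDecomp hApPsd hAmPsd hApAm hAmAp
  have htrA : (ϱ - ξ).trace = 0 := by rw [Matrix.trace_sub, htr, hξtr, sub_self]
  have htrAm : Am.trace = Ap.trace := by
    have : Ap.trace - Am.trace = 0 := by rw [← Matrix.trace_sub, hApm, htrA]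
    linear_combination -this
  have hM1 : (ϱ - (lam : ℂ) • ξ).PosSemidef := by
    have hrw : ϱ - (lam : ℂ) • ξ = (ϱ - (lam : ℂ) • 1) + (lam : ℂ) • (1 - ξ) := by
      rw [smul_sub]; abel
    rw [hrw]
    exact hmin.add (smul_psd hlam0 (one_sub_state_psd hξ hξtr))
  have htrM1 : (ϱ - (lam : ℂ) • ξ).trace = ((1 - lam : ℝ) : ℂ) := by
    rw [Matrix.trace_sub, Matrix.trace_smul, htr, hξtr, smul_eq_mul, mul_one]
    push_cast
    ring
  have ineq1 : (Q * (ϱ - (lam : ℂ) • ξ)).trace ≤ ((1 - lam : ℝ) : ℂ) := by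
    have h0 := trace_mul_nonneg hQ1Psd hM1
    rw [sub_mul, one_mul, Matrix.trace_sub, htrM1] at h0
    exact sub_nonneg.mp h0
  have ineq2 : 0 ≤ (Q * ξ).trace := trace_mul_nonneg hQPsd hξ
  have hdecomp : Q * (ϱ - ξ) = Q * (ϱ - (lam : ℂ) • ξ) - ((1 - lam : ℝ) : ℂ) • (Q * ξ) := by
    rw [mul_sub, mul_sub]
    push_cast
    rw [mul_smul_comm]
    rw [sub_smul, one_smul]
    abel
  have hled : (Q * (ϱ - ξ)).trace ≤ ((1 - lam : ℝ) : ℂ) := by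
    rw [hdecomp, Matrix.trace_sub, Matrix.trace_smul]
    calc (Q * (ϱ - (lam : ℂ) • ξ)).trace - ((1 - lam : ℝ) : ℂ) • (Q * ξ).trace
        ≤ (Q * (ϱ - (lam : ℂ) • ξ)).trace := by
          refine sub_le_self _ ?_
          rw [smul_eq_mul]
          refine mul_nonneg ?_ ineq2
          rw [← Complex.ofReal_zero, Complex.real_le_real]
          linarith
      _ ≤ ((1 - lam : ℝ) : ℂ) := ineq1
  have hre : (Q * (ϱ - ξ)).trace.re ≤ 1 - lam := by
    have := Complex.le_def.mp hled
    simpa using this.1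
  have hAmre : Am.trace.re = Ap.trace.re := congrArg Complex.re htrAm
  calc traceNorm (ϱ - ξ) = 2 * Ap.trace.re := by rw [htn, hAmre]; ring
    _ = 2 * (Q * (ϱ - ξ)).trace.re := by rw [hQA]
    _ ≤ 2 * (1 - lam) := by linarith

/-- Part 3 helpers about weight and boundariness. -/
lemma mem_S {x : Matrix (Fin d) (Fin d) ℂ} (hx : x.PosSemidef ∧ x.trace = 1)
    (htr : ϱ.trace = 1) (hmin : (ϱ - (lam : ℂ) • 1).PosSemidef)
    {t : ℝ} (ht0 : 0 ≤ t) (ht1 : t < 1) (htlam : t ≤ lam) :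
    0 ≤ t ∧ t < 1 ∧ (1 - t)⁻¹ • (ϱ - t • x) ∈
      {ρ : Matrix (Fin d) (Fin d) ℂ | ρ.PosSemidef ∧ ρ.trace = 1} := by
  refine ⟨ht0, ht1, ?_, ?_⟩
  · rw [real_smul_matrix, real_smul_matrix]
    refine smul_psd (inv_nonneg.mpr (by linarith)) ?_
    have hrw : ϱ - (t : ℂ) • x =
        (ϱ - (lam : ℂ) • 1) + ((lam - t : ℝ) : ℂ) • 1 + (t : ℂ) • (1 - x) := by
      rw [smul_sub]
      push_cast
      rw [sub_smul]
      abel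
    rw [hrw]
    exact (hmin.add (smul_psd (by linarith) Matrix.PosSemidef.one)).add
      (smul_psd ht0 (one_sub_state_psd hx.1 hx.2))
  · rw [real_smul_matrix, real_smul_matrix, Matrix.trace_smul, Matrix.trace_sub,
      Matrix.trace_smul, htr, hx.2, smul_eq_mul, smul_eq_mul, mul_one]
    rw [show ((1:ℂ) - (t:ℂ)) = (((1 - t : ℝ)) : ℂ) by push_cast; ring]
    rw [← Complex.ofReal_mul, inv_mul_cancel₀ (by linarith : (1:ℝ) - t ≠ 0)]
    norm_num

lemma bddAbove_S (x : Matrix (Fin d) (Fin d) ℂ) :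
    BddAbove {t : ℝ | 0 ≤ t ∧ t < 1 ∧ (1 - t)⁻¹ • (ϱ - t • x) ∈
      {ρ : Matrix (Fin d) (Fin d) ℂ | ρ.PosSemidef ∧ ρ.trace = 1}} :=
  ⟨1, fun t ht => le_of_lt ht.2.1⟩

lemma weight_ge {x : Matrix (Fin d) (Fin d) ℂ} (hx : x.PosSemidef ∧ x.trace = 1)
    (htr : ϱ.trace = 1) (hmin : (ϱ - (lam : ℂ) • 1).PosSemidef)
    (hlam0 : 0 ≤ lam) (hlam1 : lam ≤ 1) :
    lam ≤ weight {ρ : Matrix (Fin d) (Fin d) ℂ | ρ.PosSemidef ∧ ρ.trace = 1} ϱ x := by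
  rcases eq_or_lt_of_le hlam0 with h0 | h0
  · rw [← h0]
    refine le_csSup (bddAbove_S x) ?_
    have := mem_S hx htr hmin le_rfl one_pos (le_of_eq h0)
    simpa using this
  · have hsub : Set.Ico 0 lam ⊆ {t : ℝ | 0 ≤ t ∧ t < 1 ∧ (1 - t)⁻¹ • (ϱ - t • x) ∈
        {ρ : Matrix (Fin d) (Fin d) ℂ | ρ.PosSemidef ∧ ρ.trace = 1}} := by
      intro t ht
      exact mem_S hx htr hmin ht.1 (lt_of_lt_of_le ht.2 hlam1) (le_of_lt ht.2)
    have := csSup_le_csSup (bddAbove_S x) (Set.nonempty_Ico.mpr h0) hsub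
    rwa [csSup_Ico h0] at this

lemma weight_le_P (hψ : star ψ ⬝ᵥ ψ = 1)
    (heig : ϱ *ᵥ ψ = (lam : ℂ) • ψ) (hpos : ϱ.PosSemidef) (htr : ϱ.trace = 1) :
    weight {ρ : Matrix (Fin d) (Fin d) ℂ | ρ.PosSemidef ∧ ρ.trace = 1} ϱ
      (Matrix.vecMulVec ψ (star ψ)) ≤ lam := by
  refine csSup_le ⟨0, by
    refine ⟨le_rfl, one_pos, ?_⟩
    simp only [zero_smul, sub_zero, sub_zero, inv_one, one_smul]
    exact ⟨hpos, htr⟩⟩ ?_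
  rintro t ⟨ht0, ht1, hpsd, -⟩
  have hinv : (0:ℝ) < (1 - t)⁻¹ := inv_pos.mpr (by linarith)
  have key := hpsd.dotProduct_mulVec_nonneg ψ
  rw [real_smul_matrix, smul_mulVec, Matrix.sub_mulVec, real_smul_matrix,
    smul_mulVec, heig, P_mulVec hψ] at key
  have hdot : star ψ ⬝ᵥ (((1 - t)⁻¹ : ℝ) : ℂ) • ((lam : ℂ) • ψ - (t : ℂ) • ψ) =
      (((1 - t)⁻¹ * (lam - t) : ℝ) : ℂ) := by
    rw [dotProduct_smul, ← sub_smul, dotProduct_smul, hψ, smul_eq_mul, smul_eq_mul, mul_one]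
    push_cast
    ring
  rw [hdot] at key
  have : (0:ℝ) ≤ (1 - t)⁻¹ * (lam - t) := by
    rw [← Complex.ofReal_zero, Complex.real_le_real] at key
    exact key
  nlinarith

lemma bdness_eq (hψ : star ψ ⬝ᵥ ψ = 1) (heig : ϱ *ᵥ ψ = (lam : ℂ) • ψ)
    (hpos : ϱ.PosSemidef) (htr : ϱ.trace = 1)
    (hmin : (ϱ - (lam : ℂ) • 1).PosSemidef)
    (hlam0 : 0 ≤ lam) (hlam1 : lam ≤ 1) :
    bdness {ρ : Matrix (Fin d) (Fin d) ℂ | ρ.PosSemidef ∧ ρ.trace = 1} ϱ = lam := by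
  have hPZ : Matrix.vecMulVec ψ (star ψ) ∈
      {ρ : Matrix (Fin d) (Fin d) ℂ | ρ.PosSemidef ∧ ρ.trace = 1} := ⟨P_psd hψ, P_trace hψ⟩
  have hlow : ∀ r ∈ weight {ρ : Matrix (Fin d) (Fin d) ℂ | ρ.PosSemidef ∧ ρ.trace = 1} ϱ ''
      {ρ : Matrix (Fin d) (Fin d) ℂ | ρ.PosSemidef ∧ ρ.trace = 1}, lam ≤ r := by
    rintro r ⟨x, hx, rfl⟩
    exact weight_ge hx htr hmin hlam0 hlam1
  have hwp : weight {ρ : Matrix (Fin d) (Fin d) ℂ | ρ.PosSemidef ∧ ρ.trace = 1} ϱ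
      (Matrix.vecMulVec ψ (star ψ)) = lam :=
    le_antisymm (weight_le_P hψ heig hpos htr) (weight_ge hPZ htr hmin hlam0 hlam1)
  refine le_antisymm ?_ ?_
  · exact hwp ▸ csInf_le ⟨lam, hlow⟩ ⟨_, hPZ, rfl⟩
  · exact le_csInf ⟨_, ⟨_, hPZ, rfl⟩⟩ hlow

end TraceNormAux

open TraceNormAux in
theorem traceNorm_to_min_eigenvector {d : ℕ} [NeZero d]
    (ϱ : Matrix (Fin d) (Fin d) ℂ) (hpos : ϱ.PosSemidef) (htr : ϱ.trace = 1)
    (lam : ℝ) (ψ : Fin d → ℂ) (hψ : star ψ ⬝ᵥ ψ = 1)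
    (heig : ϱ *ᵥ ψ = (lam : ℂ) • ψ)
    (hmin : (ϱ - (lam : ℂ) • 1).PosSemidef) :
    traceNorm (ϱ - Matrix.vecMulVec ψ (star ψ)) = 2 * (1 - lam) ∧
    sSup {r : ℝ | ∃ ξ : Matrix (Fin d) (Fin d) ℂ, ξ.PosSemidef ∧ ξ.trace = 1 ∧
        r = traceNorm (ϱ - ξ)} = 2 * (1 - lam) ∧
    sSup {r : ℝ | ∃ ξ : Matrix (Fin d) (Fin d) ℂ, ξ.PosSemidef ∧ ξ.trace = 1 ∧
        r = traceNorm (ϱ - ξ)} =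
      2 * (1 - bdness {ρ : Matrix (Fin d) (Fin d) ℂ | ρ.PosSemidef ∧ ρ.trace = 1} ϱ) := by
  -- basic facts about lam
  have hlamC : star ψ ⬝ᵥ (ϱ *ᵥ ψ) = (lam : ℂ) := by
    rw [heig, dotProduct_smul, hψ, smul_eq_mul, mul_one]
  have hlam0 : 0 ≤ lam := by
    have := hpos.dotProduct_mulVec_nonneg ψ
    rw [hlamC] at this
    exact_mod_cast Complex.zero_le_real.mp (by exact_mod_cast this)
  have hlam1 : lam ≤ 1 := by
    have h := trace_nonneg_of_psd hmin
    rw [Matrix.trace_sub, Matrix.trace_smul, htr, Matrix.trace_one, smul_eq_mul] at h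
    have h' : (0:ℝ) ≤ 1 - lam * d := by
      have := (Complex.le_def.mp h).1
      simpa using this
    have hd : (1:ℝ) ≤ (d:ℝ) := by
      have : 1 ≤ d := Nat.one_le_iff_ne_zero.mpr (NeZero.ne d)
      exact_mod_cast this
    nlinarith
  have part1 : traceNorm (ϱ - Matrix.vecMulVec ψ (star ψ)) = 2 * (1 - lam) :=
    traceNorm_P hψ heig hpos htr hmin hlam0 hlam1
  have hmem : 2 * (1 - lam) ∈ {r : ℝ | ∃ ξ : Matrix (Fin d) (Fin d) ℂ, ξ.PosSemidef ∧
      ξ.trace = 1 ∧ r = traceNorm (ϱ - ξ)} :=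
    ⟨Matrix.vecMulVec ψ (star ψ), P_psd hψ, P_trace hψ, part1.symm⟩
  have part2 : sSup {r : ℝ | ∃ ξ : Matrix (Fin d) (Fin d) ℂ, ξ.PosSemidef ∧ ξ.trace = 1 ∧
      r = traceNorm (ϱ - ξ)} = 2 * (1 - lam) := by
    refine le_antisymm (csSup_le ⟨_, hmem⟩ ?_) (le_csSup ⟨2 * (1 - lam), ?_⟩ hmem)
    · rintro r ⟨ξ, h1, h2, rfl⟩
      exact upper_bound hpos htr hmin hlam0 hlam1 h1 h2
    · rintro r ⟨ξ, h1, h2, rfl⟩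
      exact upper_bound hpos htr hmin hlam0 hlam1 h1 h2
  refine ⟨part1, part2, ?_⟩
  rw [bdness_eq hψ heig hpos htr hmin hlam0 hlam1, part2]
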